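/- For all constants λ ≥ 1, ε ≥ 0, σ ≥ 0, every Morse gauge M : [1,∞)×[0,∞) → [0,∞) and every function f : [0,∞) → [0,∞), there is a number b = b(λ,ε,σ,M,f) such that the following holds. Let X be a geodesic metric space, let A be an M-Morse subset of X, and let 𝓑 be a collection of (λ,ε,σ)-quasiconvex subsets of X such that A has f-bounded penetration with respect to 𝓑. Then for each B ∈ 𝓑 and each r > 0, diam(N_r(A) ∩ B) ≤ 7r + b. -/

import Mathlib

open Set

/-- `γ` is a `(λ, ε)`-quasigeodesic on the set `I ⊆ ℝ`. -/
def IsQuasiGeodesicOn {X : Type*} [MetricSpace X] (lam ε : ℝ) (γ : ℝ → X) (I : Set ℝ) : Prop :=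
  ∀ s ∈ I, ∀ t ∈ I,
    (1 / lam) * |s - t| - ε ≤ dist (γ s) (γ t) ∧ dist (γ s) (γ t) ≤ lam * |s - t| + ε

/-- `α : ℝ → X` is a geodesic from `x` to `y`, parametrized by arc length on
`[0, dist x y]`. -/
def IsGeodesicFromTo {X : Type*} [MetricSpace X] (α : ℝ → X) (x y : X) : Prop :=
  α 0 = x ∧ α (dist x y) = y ∧
    ∀ s ∈ Icc 0 (dist x y), ∀ t ∈ Icc 0 (dist x y), dist (α s) (α t) = |s - t|

/-- A geodesic metric space: any two points are joined by a geodesic. -/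
def GeodesicSpace (X : Type*) [MetricSpace X] : Prop :=
  ∀ x y : X, ∃ α : ℝ → X, IsGeodesicFromTo α x y

/-- `A` is `M`-Morse: every `(λ, ε)`-quasigeodesic with endpoints in `A` lies in the
`M(λ, ε)`-neighborhood of `A`. -/
def IsMorseWith {X : Type*} [MetricSpace X] (M : ℝ → ℝ → ℝ) (A : Set X) : Prop :=
  ∀ lam ε : ℝ, 1 ≤ lam → 0 ≤ ε →
    ∀ (a b : ℝ) (γ : ℝ → X), a ≤ b →
      IsQuasiGeodesicOn lam ε γ (Icc a b) → γ a ∈ A → γ b ∈ A →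
      ∀ t ∈ Icc a b, Metric.infDist (γ t) A ≤ M lam ε

/-- `B` is `(λ, ε, σ)`-quasiconvex: any two points of `B` are joined by a
`(λ, ε)`-quasigeodesic whose image lies in the `σ`-neighborhood of `B`. -/
def IsQuasiconvexWith {X : Type*} [MetricSpace X] (lam ε σ : ℝ) (B : Set X) : Prop :=
  ∀ x ∈ B, ∀ y ∈ B, ∃ (a b : ℝ) (γ : ℝ → X), a ≤ b ∧ γ a = x ∧ γ b = y ∧
    IsQuasiGeodesicOn lam ε γ (Icc a b) ∧ ∀ t ∈ Icc a b, Metric.infDist (γ t) B ≤ σ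

/-- `A` has `f`-bounded penetration with respect to the collection `𝓑`:
`diam (N_r(A) ∩ B) ≤ f r` for all `B ∈ 𝓑` and `r ≥ 0`. -/
def HasBoundedPenetrationWith {X : Type*} [MetricSpace X]
    (f : ℝ → ℝ) (A : Set X) (𝓑 : Set (Set X)) : Prop :=
  ∀ B ∈ 𝓑, ∀ r : ℝ, 0 ≤ r →
    EMetric.diam (Metric.cthickening r A ∩ B) ≤ ENNReal.ofReal (f r)

set_option maxHeartbeats 2000000 in
/-- For all `λ ≥ 1`, `ε ≥ 0`, `σ ≥ 0`, every Morse gauge `M` and every `f : [0,∞) → [0,∞)`,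
there is `b = b(λ, ε, σ, M, f)` such that: if `A` is an `M`-Morse subset of a geodesic space
`X` and `A` has `f`-bounded penetration with respect to a collection `𝓑` of
`(λ, ε, σ)`-quasiconvex subsets of `X`, then `diam (N_r(A) ∩ B) ≤ 7r + b` for every `B ∈ 𝓑`
and `r > 0`. -/
theorem morse_bounded_penetration_diam_bound
    (lam ε σ : ℝ) (hlam : 1 ≤ lam) (hε : 0 ≤ ε) (hσ : 0 ≤ σ)
    (M : ℝ → ℝ → ℝ) (f : ℝ → ℝ) :
    ∃ b : ℝ,
      ∀ (X : Type) (_ : MetricSpace X), GeodesicSpace X →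
      ∀ A : Set X, IsMorseWith M A →
      ∀ 𝓑 : Set (Set X), (∀ B ∈ 𝓑, IsQuasiconvexWith lam ε σ B) →
        HasBoundedPenetrationWith f A 𝓑 →
        ∀ B ∈ 𝓑, ∀ r : ℝ, 0 < r →
          EMetric.diam (Metric.cthickening r A ∩ B) ≤ ENNReal.ofReal (7 * r + b) := by
  have hlam0 : (0:ℝ) < lam := lt_of_lt_of_le zero_lt_one hlam
  refine ⟨7*ε + 2*σ + 7 + max (f (max (M (6*lam) (ε+1)) 0 + σ + 2)) 0, ?_⟩
  set Ms : ℝ := max (M (6*lam) (ε+1)) 0 with hMsdef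
  set Fb : ℝ := max (f (Ms + σ + 2)) 0 with hFbdef
  have hMs0 : 0 ≤ Ms := le_max_right _ _
  have hFb0 : 0 ≤ Fb := le_max_right _ _
  intro X _inst hGeo A hMorse 𝓑 hQC hBP B hB r hr
  apply EMetric.diam_le
  intro x hx y hy
  rw [edist_dist]
  refine ENNReal.ofReal_le_ofReal ?_
  by_cases hD' : dist x y ≤ 7*r + (7*ε + 2*σ + 7 + Fb)
  · exact hD'
  push_neg at hD'
  -- extract close points of A
  have hxB := hx.2
  have hyB := hy.2
  have hclose : ∀ z : X, z ∈ Metric.cthickening r A → ∃ a ∈ A, dist z a < r + 1 := by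
    intro z hz
    have h1 : EMetric.infEdist z A ≤ ENNReal.ofReal r := Metric.mem_cthickening_iff.mp hz
    have h2 : EMetric.infEdist z A < ENNReal.ofReal (r+1) :=
      lt_of_le_of_lt h1 (by rw [ENNReal.ofReal_lt_ofReal_iff (by linarith)]; linarith)
    obtain ⟨a, haA, ha⟩ := EMetric.infEdist_lt_iff.mp h2
    refine ⟨a, haA, ?_⟩
    rwa [edist_dist, ENNReal.ofReal_lt_ofReal_iff (by linarith)] at ha
  obtain ⟨a, haA, hxa⟩ := hclose x hx.1
  obtain ⟨a', ha'A, hya'⟩ := hclose y hy.1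
  -- quasigeodesic from x to y near B
  obtain ⟨s₀, s₁, γ, hs01, hγ0, hγ1, hγqg, hγB⟩ := hQC B hB x hxB y hyB
  -- reformulated lower bound for γ
  have hγlow : ∀ u ∈ Icc s₀ s₁, ∀ v ∈ Icc s₀ s₁,
      |u - v| ≤ lam * (dist (γ u) (γ v) + ε) := by
    intro u hu v hv
    have h := (hγqg u hu v hv).1
    have h' : |u - v| / lam ≤ dist (γ u) (γ v) + ε := by
      rw [div_eq_inv_mul, ← one_div]; linarith
    have h'' := (div_le_iff₀ hlam0).mp h'
    linarith
  -- last time γ is (r+1)-close to a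
  set S1 : Set ℝ := {t | t ∈ Icc s₀ s₁ ∧ dist (γ t) a ≤ r + 1} with hS1def
  have hs₀S1 : s₀ ∈ S1 := ⟨⟨le_refl _, hs01⟩, by rw [hγ0]; linarith⟩
  have hS1ne : S1.Nonempty := ⟨s₀, hs₀S1⟩
  have hS1bdd : BddAbove S1 := ⟨s₁, fun t ht => ht.1.2⟩
  set τ₁ : ℝ := sSup S1 with hτ₁def
  have hτ₁mem : τ₁ ∈ Icc s₀ s₁ :=
    ⟨le_csSup hS1bdd hs₀S1, csSup_le hS1ne (fun t ht => ht.1.2)⟩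
  have hτ₁close : dist (γ τ₁) a ≤ (r + 1) + ε := by
    by_contra hcon
    push_neg at hcon
    have hδ0 : 0 < (dist (γ τ₁) a - ((r+1)+ε)) / (2*lam) := by
      apply div_pos _ (by linarith); linarith
    obtain ⟨t, htS, htlt⟩ := exists_lt_of_lt_csSup hS1ne
      (show τ₁ - (dist (γ τ₁) a - ((r+1)+ε)) / (2*lam) < τ₁ by linarith)
    have ht1 : t ≤ τ₁ := le_csSup hS1bdd htS
    have hd : dist (γ τ₁) (γ t) ≤ lam * |τ₁ - t| + ε := (hγqg τ₁ hτ₁mem t htS.1).2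
    have habs : |τ₁ - t| ≤ (dist (γ τ₁) a - ((r+1)+ε)) / (2*lam) := by
      rw [abs_of_nonneg (by linarith)]; linarith
    have hld : lam * ((dist (γ τ₁) a - ((r+1)+ε)) / (2*lam)) =
        (dist (γ τ₁) a - ((r+1)+ε)) / 2 := by
      field_simp
    have htri := dist_triangle (γ τ₁) (γ t) a
    linarith [mul_le_mul_of_nonneg_left habs hlam0.le, htS.2, hld]
  have hafter : ∀ t, t ∈ Icc s₀ s₁ → τ₁ < t → r + 1 < dist (γ t) a := by
    intro t ht htgt
    by_contra h
    push_neg at h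
    exact absurd (le_csSup hS1bdd ⟨ht, h⟩) (not_le.mpr htgt)
  -- first time after τ₁ that γ is (r+1)-close to a'
  set S2 : Set ℝ := {t | t ∈ Icc τ₁ s₁ ∧ dist (γ t) a' ≤ r + 1} with hS2def
  have hs₁S2 : s₁ ∈ S2 := ⟨⟨hτ₁mem.2, le_refl _⟩, by rw [hγ1]; linarith⟩
  have hS2ne : S2.Nonempty := ⟨s₁, hs₁S2⟩
  have hS2bdd : BddBelow S2 := ⟨τ₁, fun t ht => ht.1.1⟩
  set τ₂ : ℝ := sInf S2 with hτ₂def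
  have hτ₂mem : τ₂ ∈ Icc τ₁ s₁ :=
    ⟨le_csInf hS2ne (fun t ht => ht.1.1), csInf_le hS2bdd hs₁S2⟩
  have hτ₂mem' : τ₂ ∈ Icc s₀ s₁ := ⟨le_trans hτ₁mem.1 hτ₂mem.1, hτ₂mem.2⟩
  have hτ₂close : dist (γ τ₂) a' ≤ (r + 1) + ε := by
    by_contra hcon
    push_neg at hcon
    have hδ0 : 0 < (dist (γ τ₂) a' - ((r+1)+ε)) / (2*lam) := by
      apply div_pos _ (by linarith); linarith
    obtain ⟨t, htS, htlt⟩ := exists_lt_of_csInf_lt hS2ne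
      (show τ₂ < τ₂ + (dist (γ τ₂) a' - ((r+1)+ε)) / (2*lam) by linarith)
    have ht1 : τ₂ ≤ t := csInf_le hS2bdd htS
    have htmem : t ∈ Icc s₀ s₁ := ⟨le_trans hτ₁mem.1 htS.1.1, htS.1.2⟩
    have hd : dist (γ τ₂) (γ t) ≤ lam * |τ₂ - t| + ε := (hγqg τ₂ hτ₂mem' t htmem).2
    have habs : |τ₂ - t| ≤ (dist (γ τ₂) a' - ((r+1)+ε)) / (2*lam) := by
      rw [abs_of_nonpos (by linarith)]; linarith
    have hld : lam * ((dist (γ τ₂) a' - ((r+1)+ε)) / (2*lam)) =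
        (dist (γ τ₂) a' - ((r+1)+ε)) / 2 := by
      field_simp
    have htri := dist_triangle (γ τ₂) (γ t) a'
    linarith [mul_le_mul_of_nonneg_left habs hlam0.le, htS.2, hld]
  have hbefore : ∀ t, t ∈ Icc τ₁ s₁ → t < τ₂ → r + 1 < dist (γ t) a' := by
    intro t ht htlt
    by_contra h
    push_neg at h
    exact absurd (csInf_le hS2bdd ⟨ht, h⟩) (not_le.mpr htlt)
  have hτ₁₂ : τ₁ ≤ τ₂ := hτ₂mem.1
  -- geodesic tails
  obtain ⟨α₁, hα₁0, hα₁1, hα₁d⟩ := hGeo a (γ τ₁)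
  obtain ⟨α₂, hα₂0, hα₂1, hα₂d⟩ := hGeo (γ τ₂) a'
  set ℓ₁ : ℝ := dist a (γ τ₁) with hℓ₁def
  set ℓ₂ : ℝ := dist (γ τ₂) a' with hℓ₂def
  have hℓ₁nn : 0 ≤ ℓ₁ := dist_nonneg
  have hℓ₂nn : 0 ≤ ℓ₂ := dist_nonneg
  have hℓ₁le : ℓ₁ ≤ r + 1 + ε := by rw [hℓ₁def, dist_comm]; linarith [hτ₁close]
  have hℓ₂le : ℓ₂ ≤ r + 1 + ε := hτ₂close
  set Q : ℝ → X := fun s => if s < τ₁ then α₁ (s - (τ₁ - ℓ₁)) else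
    if s ≤ τ₂ then γ s else α₂ (s - τ₂) with hQdef
  -- piece formulas
  have hQ2 : ∀ s, τ₁ ≤ s → s ≤ τ₂ → Q s = γ s := by
    intro s h1 h2
    simp only [hQdef, if_neg (not_lt.mpr h1), if_pos h2]
  have hQ1 : ∀ s, τ₁ - ℓ₁ ≤ s → s < τ₁ →
      dist a (Q s) = s - (τ₁ - ℓ₁) ∧ dist (Q s) (γ τ₁) = τ₁ - s := by
    intro s h1 h2
    have hsmem : s - (τ₁ - ℓ₁) ∈ Icc (0:ℝ) ℓ₁ := ⟨by linarith, by linarith⟩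
    have h0mem : (0:ℝ) ∈ Icc (0:ℝ) ℓ₁ := ⟨le_refl _, hℓ₁nn⟩
    have hlmem : ℓ₁ ∈ Icc (0:ℝ) ℓ₁ := ⟨hℓ₁nn, le_refl _⟩
    have hQs : Q s = α₁ (s - (τ₁ - ℓ₁)) := by simp only [hQdef, if_pos h2]
    constructor
    · have h := hα₁d 0 h0mem (s - (τ₁ - ℓ₁)) hsmem
      rw [hα₁0] at h
      rw [hQs, h, zero_sub, abs_neg, abs_of_nonneg hsmem.1]
    · have h := hα₁d (s - (τ₁ - ℓ₁)) hsmem ℓ₁ hlmem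
      rw [hα₁1] at h
      rw [hQs, h, abs_of_nonpos (by linarith)]
      ring
  have hQ3 : ∀ t, τ₂ < t → t ≤ τ₂ + ℓ₂ →
      dist (γ τ₂) (Q t) = t - τ₂ ∧ dist (Q t) a' = τ₂ + ℓ₂ - t := by
    intro t h1 h2
    have htmem : t - τ₂ ∈ Icc (0:ℝ) ℓ₂ := ⟨by linarith, by linarith⟩
    have h0mem : (0:ℝ) ∈ Icc (0:ℝ) ℓ₂ := ⟨le_refl _, hℓ₂nn⟩
    have hlmem : ℓ₂ ∈ Icc (0:ℝ) ℓ₂ := ⟨hℓ₂nn, le_refl _⟩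
    have hQt : Q t = α₂ (t - τ₂) := by
      simp only [hQdef, if_neg (not_lt.mpr (le_trans hτ₁₂ h1.le)),
        if_neg (not_le.mpr h1)]
    constructor
    · have h := hα₂d 0 h0mem (t - τ₂) htmem
      rw [hα₂0] at h
      rw [hQt, h, zero_sub, abs_neg, abs_of_nonneg htmem.1]
    · have h := hα₂d (t - τ₂) htmem ℓ₂ hlmem
      rw [hα₂1] at h
      rw [hQt, h, abs_of_nonpos (by linarith)]
      ring
  -- size of the middle
  have hMγ : dist x y ≤ (2*(r+1)+ε) + dist (γ τ₁) (γ τ₂) + (2*(r+1)+ε) := by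
    have t1 : dist x y ≤ dist x (γ τ₁) + dist (γ τ₁) (γ τ₂) + dist (γ τ₂) y :=
      dist_triangle4 _ _ _ _
    have t3 : dist x (γ τ₁) ≤ dist x a + ℓ₁ := by
      rw [hℓ₁def]; exact dist_triangle _ _ _
    have t4 : dist (γ τ₂) y ≤ ℓ₂ + dist a' y := by
      rw [hℓ₂def]; exact dist_triangle _ _ _
    have h6 : dist a' y ≤ r + 1 := by rw [dist_comm]; linarith [hya']
    linarith [hxa, hℓ₁le, hℓ₂le]
  have hMγbig : 14*(r+1) + 14*ε ≤ 5*(dist (γ τ₁) (γ τ₂)) + 5*ε + 6 := by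
    linarith [hMγ, hD', hσ, hε, hFb0, hr]
  -- Q is a quasigeodesic
  have key : ∀ s, s ∈ Icc (τ₁ - ℓ₁) (τ₂ + ℓ₂) → ∀ t, t ∈ Icc (τ₁ - ℓ₁) (τ₂ + ℓ₂) → s ≤ t →
      t - s ≤ 6*lam*(dist (Q s) (Q t) + (ε+1)) ∧
        dist (Q s) (Q t) ≤ 6*lam*(t-s) + (ε+1) := by
    intro s hs t ht hst
    have hdQ : 0 ≤ dist (Q s) (Q t) := dist_nonneg
    have htriv : ∀ z : ℝ, 0 ≤ z → dist (Q s) (Q t) = z →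
        z ≤ 6*lam*(dist (Q s) (Q t) + (ε+1)) ∧
          dist (Q s) (Q t) ≤ 6*lam*z + (ε+1) := by
      intro z hz hd
      rw [hd]
      constructor
      · nlinarith [mul_le_mul_of_nonneg_right hlam hz,
          mul_nonneg hlam0.le (show (0:ℝ) ≤ ε+1 by linarith)]
      · nlinarith [mul_le_mul_of_nonneg_right hlam hz,
          mul_nonneg hlam0.le (show (0:ℝ) ≤ ε+1 by linarith)]
    rcases lt_or_ge s τ₁ with hs1 | hs1
    · obtain ⟨hda_s, hdg_s⟩ := hQ1 s hs.1 hs1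
      rcases lt_or_ge t τ₁ with ht1 | ht1
      · -- (1,1) both on the left tail
        have hQs : Q s = α₁ (s - (τ₁ - ℓ₁)) := by simp only [hQdef, if_pos hs1]
        have hQt : Q t = α₁ (t - (τ₁ - ℓ₁)) := by simp only [hQdef, if_pos ht1]
        have hd : dist (Q s) (Q t) = t - s := by
          rw [hQs, hQt, hα₁d _ ⟨by linarith [hs.1], by linarith⟩ _
            ⟨by linarith [ht.1], by linarith⟩, abs_of_nonpos (by linarith)]
          ring
        exact htriv (t - s) (by linarith) hd
      · rcases le_or_gt t τ₂ with ht2 | ht2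
        · -- (1,2) left tail to middle
          have hQt : Q t = γ t := hQ2 t ht1 ht2
          have htmem : t ∈ Icc s₀ s₁ := ⟨le_trans hτ₁mem.1 ht1, le_trans ht2 hτ₂mem.2⟩
          rcases eq_or_lt_of_le ht1 with heq | hlt
          · have hd : dist (Q s) (Q t) = t - s := by
              rw [hQt, ← heq]; exact hdg_s
            exact htriv (t - s) (by linarith) hd
          · have hfar : r + 1 < dist (γ t) a := hafter t htmem hlt
            have e1 : dist a (γ t) ≤ dist a (Q s) + dist (Q s) (γ t) := dist_triangle _ _ _
            have e2 : dist (γ τ₁) (γ t) ≤ dist (γ τ₁) (Q s) + dist (Q s) (γ t) :=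
              dist_triangle _ _ _
            have e3 := hγlow τ₁ hτ₁mem t htmem
            have habs : |τ₁ - t| = t - τ₁ := by rw [abs_of_nonpos (by linarith)]; ring
            have hup := (hγqg τ₁ hτ₁mem t htmem).2
            have hc : dist (γ τ₁) (Q s) = τ₁ - s := by rw [dist_comm]; exact hdg_s
            have hca : dist a (γ t) = dist (γ t) a := dist_comm _ _
            rw [hQt]
            have hdlow : (τ₁ - s) - ε ≤ dist (Q s) (γ t) := by
              linarith [hda_s, hℓ₁le, e1, hfar, hca]
            have p1 : 0 ≤ lam * (dist (Q s) (γ t) - (τ₁ - s) + ε) :=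
              mul_nonneg hlam0.le (by linarith)
            have p2 : t - τ₁ ≤ lam * ((τ₁ - s) + dist (Q s) (γ t) + ε) := by
              have := mul_le_mul_of_nonneg_left
                (show dist (γ τ₁) (γ t) + ε ≤ (τ₁ - s) + dist (Q s) (γ t) + ε by linarith)
                hlam0.le
              rw [habs] at e3
              linarith
            have p3 : (τ₁ - s) ≤ lam * (τ₁ - s) :=
              le_mul_of_one_le_left (by linarith) hlam
            have p4 : 0 ≤ lam * (t - τ₁) := mul_nonneg hlam0.le (by linarith)
            constructor
            · linarith [p1, p2, p3, hlam0]
            · have hub : dist (Q s) (γ t) ≤ (τ₁ - s) + (lam * (t - τ₁) + ε) := by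
                have := dist_triangle (Q s) (γ τ₁) (γ t)
                rw [habs] at hup
                linarith [hdg_s]
              linarith [p3, p4]
        · -- (1,3) left tail to right tail
          obtain ⟨hdg_t, hda'_t⟩ := hQ3 t ht2 ht.2
          have e1 : dist (γ τ₁) (γ τ₂) ≤
              dist (γ τ₁) (Q s) + dist (Q s) (Q t) + dist (Q t) (γ τ₂) :=
            dist_triangle4 _ _ _ _
          have hc : dist (γ τ₁) (Q s) = τ₁ - s := by rw [dist_comm]; exact hdg_s
          have hc2 : dist (Q t) (γ τ₂) = t - τ₂ := by rw [dist_comm]; exact hdg_t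
          have e3 := hγlow τ₁ hτ₁mem τ₂ hτ₂mem'
          have habs : |τ₁ - τ₂| = τ₂ - τ₁ := by rw [abs_of_nonpos (by linarith)]; ring
          have hup := (hγqg τ₁ hτ₁mem τ₂ hτ₂mem').2
          have hp1 : 0 ≤ τ₁ - s := by linarith
          have hp2 : τ₁ - s ≤ r + 1 + ε := by linarith [hs.1, hℓ₁le]
          have hq1 : 0 ≤ t - τ₂ := by linarith
          have hq2 : t - τ₂ ≤ r + 1 + ε := by linarith [ht.2, hℓ₂le]
          have q1 : lam * dist (γ τ₁) (γ τ₂) ≤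
              lam * ((τ₁ - s) + dist (Q s) (Q t) + (t - τ₂)) :=
            mul_le_mul_of_nonneg_left (by linarith) hlam0.le
          have q2 : τ₂ - τ₁ ≤ lam * (dist (γ τ₁) (γ τ₂) + ε) := by rw [habs] at e3; linarith
          have q3 : τ₁ - s ≤ lam * (r+1+ε) :=
            le_trans hp2 (le_mul_of_one_le_left (by linarith) hlam)
          have q4 : t - τ₂ ≤ lam * (r+1+ε) :=
            le_trans hq2 (le_mul_of_one_le_left (by linarith) hlam)
          have q5 : lam * (τ₁ - s) ≤ lam * (r+1+ε) :=
            mul_le_mul_of_nonneg_left hp2 hlam0.le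
          have q6 : lam * (t - τ₂) ≤ lam * (r+1+ε) :=
            mul_le_mul_of_nonneg_left hq2 hlam0.le
          have q7 : lam * (14*(r+1) + 14*ε) ≤ lam * (5*(dist (γ τ₁) (γ τ₂)) + 5*ε + 6) :=
            mul_le_mul_of_nonneg_left hMγbig hlam0.le
          constructor
          · linarith [q1, q2, q3, q4, q5, q6, q7]
          · have r1 : τ₁ - s ≤ lam * (τ₁ - s) := le_mul_of_one_le_left hp1 hlam
            have r2 : t - τ₂ ≤ lam * (t - τ₂) := le_mul_of_one_le_left hq1 hlam
            have r3 : 0 ≤ lam * (τ₂ - τ₁) := mul_nonneg hlam0.le (by linarith)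
            have r4 : 0 ≤ lam * (τ₁ - s) := mul_nonneg hlam0.le hp1
            have r5 : 0 ≤ lam * (t - τ₂) := mul_nonneg hlam0.le hq1
            have htr : dist (Q s) (Q t) ≤
                dist (Q s) (γ τ₁) + dist (γ τ₁) (γ τ₂) + dist (γ τ₂) (Q t) :=
              dist_triangle4 _ _ _ _
            rw [habs] at hup
            linarith [hdg_s, hdg_t, r1, r2, r3, r4, r5]
    · rcases le_or_gt s τ₂ with hs2 | hs2
      · -- s in the middle
        have hQs : Q s = γ s := hQ2 s hs1 hs2
        have hsmem : s ∈ Icc s₀ s₁ := ⟨le_trans hτ₁mem.1 hs1, le_trans hs2 hτ₂mem.2⟩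
        rcases le_or_gt t τ₂ with ht2 | ht2
        · -- (2,2) both in the middle
          have ht1 : τ₁ ≤ t := le_trans hs1 hst
          have hQt : Q t = γ t := hQ2 t ht1 ht2
          have htmem : t ∈ Icc s₀ s₁ := ⟨le_trans hτ₁mem.1 ht1, le_trans ht2 hτ₂mem.2⟩
          have e3 := hγlow s hsmem t htmem
          have hup := (hγqg s hsmem t htmem).2
          have habs : |s - t| = t - s := by rw [abs_of_nonpos (by linarith)]; ring
          rw [hQs, hQt]
          rw [habs] at e3 hup
          have w1 : 0 ≤ lam * dist (γ s) (γ t) := mul_nonneg hlam0.le dist_nonneg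
          have w2 : 0 ≤ lam * ε := mul_nonneg hlam0.le hε
          have w3 : 0 ≤ lam * (t - s) := mul_nonneg hlam0.le (by linarith)
          exact ⟨by linarith, by linarith⟩
        · -- (2,3) middle to right tail
          obtain ⟨hdg_t, hda'_t⟩ := hQ3 t ht2 ht.2
          rcases eq_or_lt_of_le hs2 with heq | hlt
          · have hd : dist (Q s) (Q t) = t - s := by
              rw [hQs, heq]; exact hdg_t
            exact htriv (t - s) (by linarith) hd
          · have hfar : r + 1 < dist (γ s) a' := hbefore s ⟨hs1, le_trans hs2 hτ₂mem.2⟩ hlt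
            have e1 : dist (γ s) a' ≤ dist (γ s) (Q t) + dist (Q t) a' := dist_triangle _ _ _
            have e2 : dist (γ s) (γ τ₂) ≤ dist (γ s) (Q t) + dist (Q t) (γ τ₂) :=
              dist_triangle _ _ _
            have hc2 : dist (Q t) (γ τ₂) = t - τ₂ := by rw [dist_comm]; exact hdg_t
            have e3 := hγlow s hsmem τ₂ hτ₂mem'
            have habs : |s - τ₂| = τ₂ - s := by rw [abs_of_nonpos (by linarith)]; ring
            have hup := (hγqg s hsmem τ₂ hτ₂mem').2
            rw [habs] at e3 hup
            rw [hQs]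
            have hdlow : (t - τ₂) - ε ≤ dist (γ s) (Q t) := by
              linarith [hda'_t, hℓ₂le, e1, hfar]
            have p1 : 0 ≤ lam * (dist (γ s) (Q t) - (t - τ₂) + ε) :=
              mul_nonneg hlam0.le (by linarith)
            have p2 : τ₂ - s ≤ lam * ((t - τ₂) + dist (γ s) (Q t) + ε) := by
              have := mul_le_mul_of_nonneg_left
                (show dist (γ s) (γ τ₂) + ε ≤ (t - τ₂) + dist (γ s) (Q t) + ε by linarith)
                hlam0.le
              linarith
            have p3 : (t - τ₂) ≤ lam * (t - τ₂) :=
              le_mul_of_one_le_left (by linarith) hlam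
            have p4 : 0 ≤ lam * (τ₂ - s) := mul_nonneg hlam0.le (by linarith)
            constructor
            · linarith [p1, p2, p3, hlam0]
            · have hub : dist (γ s) (Q t) ≤ (lam * (τ₂ - s) + ε) + (t - τ₂) := by
                have := dist_triangle (γ s) (γ τ₂) (Q t)
                linarith [hdg_t]
              linarith [p3, p4]
      · -- (3,3) both on the right tail
        have ht2 : τ₂ < t := lt_of_lt_of_le hs2 hst
        have hQs : Q s = α₂ (s - τ₂) := by
          simp only [hQdef, if_neg (not_lt.mpr (le_trans hτ₁₂ hs2.le)),
            if_neg (not_le.mpr hs2)]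
        have hQt : Q t = α₂ (t - τ₂) := by
          simp only [hQdef, if_neg (not_lt.mpr (le_trans hτ₁₂ ht2.le)),
            if_neg (not_le.mpr ht2)]
        have hd : dist (Q s) (Q t) = t - s := by
          rw [hQs, hQt, hα₂d _ ⟨by linarith, by linarith [hs.2]⟩ _
            ⟨by linarith, by linarith [ht.2]⟩, abs_of_nonpos (by linarith)]
          ring
        exact htriv (t - s) (by linarith) hd
  have hQG : IsQuasiGeodesicOn (6*lam) (ε+1) Q (Icc (τ₁ - ℓ₁) (τ₂ + ℓ₂)) := by
    intro s hs t ht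
    have h6 : (0:ℝ) < 6*lam := by linarith
    rcases le_total s t with h | h
    · obtain ⟨k1, k2⟩ := key s hs t ht h
      have habs : |s - t| = t - s := by rw [abs_of_nonpos (by linarith)]; ring
      rw [habs]
      constructor
      · have hh : (t - s) / (6*lam) ≤ dist (Q s) (Q t) + (ε+1) := by
          rw [div_le_iff₀ h6]; linarith
        rw [one_div, ← div_eq_inv_mul]
        linarith
      · exact k2
    · obtain ⟨k1, k2⟩ := key t ht s hs h
      have habs : |s - t| = s - t := abs_of_nonneg (by linarith)
      have hcomm : dist (Q s) (Q t) = dist (Q t) (Q s) := dist_comm _ _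
      rw [habs, hcomm]
      constructor
      · have hh : (s - t) / (6*lam) ≤ dist (Q t) (Q s) + (ε+1) := by
          rw [div_le_iff₀ h6]; linarith
        rw [one_div, ← div_eq_inv_mul]
        linarith
      · exact k2
  -- endpoints of Q lie in A
  have hQstart : Q (τ₁ - ℓ₁) = a := by
    rcases eq_or_lt_of_le hℓ₁nn with h0 | h0
    · have hτeq : τ₁ - ℓ₁ = τ₁ := by rw [← h0]; ring
      rw [hτeq, hQ2 τ₁ le_rfl hτ₁₂]
      exact (eq_of_dist_eq_zero (by rw [hℓ₁def] at h0; exact h0.symm)).symm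
    · have hlt : τ₁ - ℓ₁ < τ₁ := by linarith
      simp only [hQdef, if_pos hlt]
      rw [show τ₁ - ℓ₁ - (τ₁ - ℓ₁) = 0 by ring, hα₁0]
  have hQend : Q (τ₂ + ℓ₂) = a' := by
    rcases eq_or_lt_of_le hℓ₂nn with h0 | h0
    · have hτeq : τ₂ + ℓ₂ = τ₂ := by rw [← h0]; ring
      rw [hτeq, hQ2 τ₂ hτ₁₂ le_rfl]
      exact eq_of_dist_eq_zero (by rw [hℓ₂def] at h0; exact h0.symm)
    · have h1 : ¬ (τ₂ + ℓ₂ < τ₁) := by push_neg; linarith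
      have h2 : ¬ (τ₂ + ℓ₂ ≤ τ₂) := by push_neg; linarith
      simp only [hQdef, if_neg h1, if_neg h2]
      rw [show τ₂ + ℓ₂ - τ₂ = ℓ₂ by ring, hα₂1]
  have hmorse := hMorse (6*lam) (ε+1) (by linarith) (by linarith)
    (τ₁ - ℓ₁) (τ₂ + ℓ₂) Q (by linarith) hQG
    (by rw [hQstart]; exact haA) (by rw [hQend]; exact ha'A)
  have hM1 : Metric.infDist (γ τ₁) A ≤ Ms := by
    have h := hmorse τ₁ ⟨by linarith, by linarith⟩
    rw [hQ2 τ₁ le_rfl hτ₁₂] at h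
    exact le_trans h (le_max_left _ _)
  have hM2 : Metric.infDist (γ τ₂) A ≤ Ms := by
    have h := hmorse τ₂ ⟨by linarith, by linarith⟩
    rw [hQ2 τ₂ hτ₁₂ le_rfl] at h
    exact le_trans h (le_max_left _ _)
  -- points of B near γ τ₁, γ τ₂
  have hBne : B.Nonempty := ⟨x, hxB⟩
  have hAne : A.Nonempty := ⟨a, haA⟩
  obtain ⟨b₁, hb₁B, hb₁d⟩ := (Metric.infDist_lt_iff hBne).mp
    (lt_of_le_of_lt (hγB τ₁ hτ₁mem) (by linarith : σ < σ + 1))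
  obtain ⟨b₂, hb₂B, hb₂d⟩ := (Metric.infDist_lt_iff hBne).mp
    (lt_of_le_of_lt (hγB τ₂ hτ₂mem') (by linarith : σ < σ + 1))
  obtain ⟨a₁, ha₁A, ha₁d⟩ := (Metric.infDist_lt_iff hAne).mp
    (lt_of_le_of_lt hM1 (by linarith : Ms < Ms + 1))
  obtain ⟨a₂, ha₂A, ha₂d⟩ := (Metric.infDist_lt_iff hAne).mp
    (lt_of_le_of_lt hM2 (by linarith : Ms < Ms + 1))
  have hb₁mem : b₁ ∈ Metric.cthickening (Ms + σ + 2) A := by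
    apply Metric.mem_cthickening_of_dist_le b₁ a₁ _ _ ha₁A
    calc dist b₁ a₁ ≤ dist b₁ (γ τ₁) + dist (γ τ₁) a₁ := dist_triangle _ _ _
      _ ≤ Ms + σ + 2 := by rw [dist_comm b₁ (γ τ₁)]; linarith
  have hb₂mem : b₂ ∈ Metric.cthickening (Ms + σ + 2) A := by
    apply Metric.mem_cthickening_of_dist_le b₂ a₂ _ _ ha₂A
    calc dist b₂ a₂ ≤ dist b₂ (γ τ₂) + dist (γ τ₂) a₂ := dist_triangle _ _ _
      _ ≤ Ms + σ + 2 := by rw [dist_comm b₂ (γ τ₂)]; linarith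
  have hdiam := hBP B hB (Ms + σ + 2) (by linarith)
  have hedist := le_trans (EMetric.edist_le_diam_of_mem (Set.mem_inter hb₁mem hb₁B) (Set.mem_inter hb₂mem hb₂B)) hdiam
  have hbd : dist b₁ b₂ ≤ Fb := by
    have h2 : edist b₁ b₂ ≤ ENNReal.ofReal Fb :=
      le_trans hedist (ENNReal.ofReal_le_ofReal (le_max_left _ _))
    rw [edist_dist] at h2
    exact (ENNReal.ofReal_le_ofReal_iff hFb0).mp h2
  -- final chain
  have t1 : dist x y ≤ dist x (γ τ₁) + dist (γ τ₁) (γ τ₂) + dist (γ τ₂) y :=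
    dist_triangle4 _ _ _ _
  have t2 : dist (γ τ₁) (γ τ₂) ≤ dist (γ τ₁) b₁ + dist b₁ b₂ + dist b₂ (γ τ₂) :=
    dist_triangle4 _ _ _ _
  have t3 : dist x (γ τ₁) ≤ dist x a + ℓ₁ := by
    rw [hℓ₁def]; exact dist_triangle _ _ _
  have t4 : dist (γ τ₂) y ≤ ℓ₂ + dist a' y := by
    rw [hℓ₂def]; exact dist_triangle _ _ _
  have h6 : dist a' y ≤ r + 1 := by rw [dist_comm]; linarith [hya']
  have h7 : dist b₂ (γ τ₂) ≤ σ + 1 := by rw [dist_comm]; linarith [hb₂d]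
  have h8 : dist (γ τ₁) b₁ ≤ σ + 1 := by linarith [hb₁d]
  linarith [hxa, hℓ₁le, hℓ₂le, hbd]
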